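/- Let B be a Boolean algebra and let Ω ⊆ B be a subset closed under meet, join and complement and containing the top element. Any finitely additive function μ₀ : Ω → [0,1] with μ₀(⊤) = 1 extends to a finitely additive probability measure on all of B. -/

import Mathlib

open Classical

noncomputable section ExtendFAux

variable {B : Type*} [BooleanAlgebra B]

/-- The type of prime ideals of a Boolean algebra. -/
abbrev PIdlFA (B : Type*) [BooleanAlgebra B] := {J : Order.Ideal B // Order.Ideal.IsPrime J}

/-- The "indicator of the complementary ultrafilter" of a prime ideal. -/
noncomputable def indFA (b : B) (J : PIdlFA B) : ℝ := if b ∈ J.1 then 0 else 1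

/-- Atoms of the finite subalgebra generated by `s`, indexed by subsets of `s`. -/
noncomputable def atomFA (s t : Finset B) : B := t.inf id ⊓ (s \ t).inf compl

lemma exists_prime_not_mem {e : B} (he : e ≠ ⊥) : ∃ J : PIdlFA B, e ∉ J.1 := by
  have hd : Disjoint ((Order.PFilter.principal e : Order.PFilter B) : Set B)
      ((Order.Ideal.principal (⊥ : B) : Order.Ideal B) : Set B) := by
    rw [Set.disjoint_left]
    intro x hx hx'
    have h1 : e ≤ x := Order.PFilter.mem_principal.1 hx
    have h2 : x ≤ ⊥ := Order.Ideal.mem_principal.1 hx'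
    exact he (le_bot_iff.1 (h1.trans h2))
  obtain ⟨J, hJ, -, hdisj⟩ := DistribLattice.prime_ideal_of_disjoint_filter_ideal hd
  refine ⟨⟨J, hJ⟩, fun heJ => ?_⟩
  exact Set.disjoint_left.1 hdisj (Order.PFilter.mem_principal.2 le_rfl) heJ

lemma indFA_nonneg (b : B) (J : PIdlFA B) : 0 ≤ indFA b J := by
  unfold indFA; split <;> norm_num

lemma indFA_le_one (b : B) (J : PIdlFA B) : indFA b J ≤ 1 := by
  unfold indFA; split <;> norm_num

lemma indFA_top (J : PIdlFA B) : indFA ⊤ J = 1 := by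
  have := J.2.toIsProper.top_notMem
  simp [indFA, this]

lemma indFA_add (a b : B) (hab : a ⊓ b = ⊥) (J : PIdlFA B) :
    indFA (a ⊔ b) J = indFA a J + indFA b J := by
  have hbot : a ⊓ b ∈ J.1 := by rw [hab]; exact J.1.bot_mem
  have hor : a ∈ J.1 ∨ b ∈ J.1 := J.2.mem_or_mem hbot
  unfold indFA
  by_cases ha : a ∈ J.1 <;> by_cases hb : b ∈ J.1
  · simp [ha, hb, J.1.sup_mem ha hb]
  · have : a ⊔ b ∉ J.1 := fun h => hb (J.1.lower le_sup_right h)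
    simp [ha, hb, this]
  · have : a ⊔ b ∉ J.1 := fun h => ha (J.1.lower le_sup_left h)
    simp [ha, hb, this]
  · tauto

lemma atomFA_le_of_mem {s t : Finset B} {a : B} (hat : a ∈ t) :
    atomFA s t ≤ a :=
  inf_le_left.trans (Finset.inf_le (f := id) hat)

lemma atomFA_le_compl_of_not_mem {s t : Finset B} {a : B} (has : a ∈ s) (hat : a ∉ t) :
    atomFA s t ≤ aᶜ :=
  inf_le_right.trans (Finset.inf_le (f := compl) (Finset.mem_sdiff.2 ⟨has, hat⟩))

section Meas

variable (Ω : Set B)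
    (htop : (⊤ : B) ∈ Ω)
    (hmeet : ∀ a b, a ∈ Ω → b ∈ Ω → a ⊓ b ∈ Ω)
    (hcompl : ∀ a, a ∈ Ω → aᶜ ∈ Ω)
    (μ₀ : B → ℝ)
    (hrange : ∀ a ∈ Ω, μ₀ a ∈ Set.Icc (0:ℝ) 1)
    (hone : μ₀ ⊤ = 1)
    (hadd : ∀ a b, a ∈ Ω → b ∈ Ω → a ⊓ b = ⊥ → μ₀ (a ⊔ b) = μ₀ a + μ₀ b)

include htop hmeet in
lemma infFA_mem (f : B → B) (t : Finset B) (hf : ∀ x ∈ t, f x ∈ Ω) : t.inf f ∈ Ω := by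
  classical
  induction t using Finset.induction_on with
  | empty => simpa using htop
  | insert _ _ ha ih =>
      rw [Finset.inf_insert]
      exact hmeet _ _ (hf _ (Finset.mem_insert_self _ _))
        (ih fun x hx => hf _ (Finset.mem_insert_of_mem hx))

include htop hmeet hcompl in
lemma atomFA_mem {s t : Finset B} (hs : ↑s ⊆ Ω) (hts : t ⊆ s) : atomFA s t ∈ Ω := by
  refine hmeet _ _ (infFA_mem Ω htop hmeet id t ?_) (infFA_mem Ω htop hmeet compl _ ?_)
  · exact fun x hx => hs (hts hx)
  · exact fun x hx => hcompl _ (hs (Finset.mem_sdiff.1 hx).1)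

include hmeet hcompl hadd in
lemma splitFA {x a : B} (hx : x ∈ Ω) (ha : a ∈ Ω) :
    μ₀ x = μ₀ (x ⊓ a) + μ₀ (x ⊓ aᶜ) := by
  have hdisj : (x ⊓ a) ⊓ (x ⊓ aᶜ) = ⊥ := by
    rw [eq_bot_iff]
    calc (x ⊓ a) ⊓ (x ⊓ aᶜ) ≤ a ⊓ aᶜ := inf_le_inf inf_le_right inf_le_right
    _ = ⊥ := inf_compl_eq_bot
  have hsup : (x ⊓ a) ⊔ (x ⊓ aᶜ) = x := by
    rw [← inf_sup_left, sup_compl_eq_top, inf_top_eq]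
  have := hadd (x ⊓ a) (x ⊓ aᶜ) (hmeet _ _ hx ha) (hmeet _ _ hx (hcompl _ ha)) hdisj
  rw [hsup] at this
  exact this

include htop hmeet hcompl hadd in
lemma addFA (s : Finset B) :
    ↑s ⊆ Ω → ∀ b ∈ Ω, μ₀ b = ∑ t ∈ s.powerset, μ₀ (b ⊓ atomFA s t) := by
  classical
  induction s using Finset.induction_on with
  | empty =>
      intro _ b hb
      simp [atomFA]
  | @insert a s ha ih =>
      intro hs b hb
      have ha' : a ∈ Ω := hs (by simp)
      have hs' : ↑s ⊆ Ω := fun x hx => hs (by simp [hx])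
      rw [Finset.sum_powerset_insert ha]
      have e1 : ∀ t ∈ s.powerset, μ₀ (b ⊓ atomFA (insert a s) t)
          = μ₀ ((b ⊓ atomFA s t) ⊓ aᶜ) := by
        intro t ht
        have hat : a ∉ t := fun h => ha (Finset.mem_powerset.1 ht h)
        have hsd : (insert a s) \ t = insert a (s \ t) :=
          Finset.insert_sdiff_of_notMem s hat
        rw [atomFA, hsd, Finset.inf_insert, atomFA]
        congr 1
        show b ⊓ (t.inf id ⊓ (compl a ⊓ (s \ t).inf compl)) = b ⊓ (t.inf id ⊓ (s \ t).inf compl) ⊓ aᶜ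
        ac_rfl
      have e2 : ∀ t ∈ s.powerset, μ₀ (b ⊓ atomFA (insert a s) (insert a t))
          = μ₀ ((b ⊓ atomFA s t) ⊓ a) := by
        intro t ht
        have hts : t ⊆ s := Finset.mem_powerset.1 ht
        have hsd : (insert a s) \ (insert a t) = s \ t := by
          ext x
          simp only [Finset.mem_sdiff, Finset.mem_insert]
          constructor
          · rintro ⟨h1 | h1, h2⟩
            · exact absurd (Or.inl h1) h2
            · exact ⟨h1, fun hx => h2 (Or.inr hx)⟩
          · rintro ⟨h1, h2⟩
            refine ⟨Or.inr h1, ?_⟩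
            rintro (rfl | hx)
            · exact ha h1
            · exact h2 hx
        rw [atomFA, hsd, Finset.inf_insert, atomFA]
        congr 1
        show b ⊓ (id a ⊓ t.inf id ⊓ (s \ t).inf compl) = b ⊓ (t.inf id ⊓ (s \ t).inf compl) ⊓ a
        show b ⊓ (a ⊓ t.inf id ⊓ (s \ t).inf compl) = b ⊓ (t.inf id ⊓ (s \ t).inf compl) ⊓ a
        ac_rfl
      rw [Finset.sum_congr rfl e1, Finset.sum_congr rfl e2, ← Finset.sum_add_distrib]
      rw [ih hs' b hb]
      refine Finset.sum_congr rfl fun t ht => ?_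
      have hmem : b ⊓ atomFA s t ∈ Ω :=
        hmeet _ _ hb (atomFA_mem Ω htop hmeet hcompl hs' (Finset.mem_powerset.1 ht))
      rw [splitFA Ω hmeet hcompl μ₀ hadd hmem ha', add_comm]

include htop hmeet hcompl hrange hone hadd in
lemma keyFA (s : Finset B) (hs : ↑s ⊆ Ω) (c : B → ℝ) :
    ∃ J : PIdlFA B, ∑ a ∈ s, c a * μ₀ a ≤ ∑ a ∈ s, c a * indFA a J := by
  classical
  have hbot : (⊥ : B) ∈ Ω := by simpa using hcompl ⊤ htop
  have hμbot : μ₀ ⊥ = 0 := by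
    have h := hadd ⊥ ⊥ hbot hbot (by simp)
    simp only [sup_idem] at h
    linarith
  set m : Finset B → ℝ := fun t => μ₀ (atomFA s t) with hm
  have hm0 : ∀ t ∈ s.powerset, 0 ≤ m t := fun t ht =>
    (hrange _ (atomFA_mem Ω htop hmeet hcompl hs (Finset.mem_powerset.1 ht))).1
  have hms : ∑ t ∈ s.powerset, m t = 1 := by
    have h := addFA Ω htop hmeet hcompl μ₀ hadd s hs ⊤ htop
    rw [hone] at h
    simp only [top_inf_eq] at h
    exact h.symm
  have hSa : ∀ a ∈ s, μ₀ a = ∑ t ∈ s.powerset, (if a ∈ t then m t else 0) := by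
    intro a has
    have h := addFA Ω htop hmeet hcompl μ₀ hadd s hs a (hs has)
    rw [h]
    refine Finset.sum_congr rfl fun t ht => ?_
    by_cases hat : a ∈ t
    · rw [if_pos hat, hm]
      have hle : atomFA s t ≤ a := atomFA_le_of_mem hat
      rw [inf_eq_right.2 hle]
    · rw [if_neg hat]
      have h1 : atomFA s t ≤ aᶜ := atomFA_le_compl_of_not_mem has hat
      have hb : a ⊓ atomFA s t = ⊥ := by
        rw [eq_bot_iff]
        calc a ⊓ atomFA s t ≤ a ⊓ aᶜ := inf_le_inf_left a h1
          _ = ⊥ := inf_compl_eq_bot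
      rw [hb, hμbot]
  have hexch : ∑ a ∈ s, c a * μ₀ a = ∑ t ∈ s.powerset, (∑ a ∈ t, c a) * m t := by
    calc ∑ a ∈ s, c a * μ₀ a
        = ∑ a ∈ s, ∑ t ∈ s.powerset, (if a ∈ t then c a * m t else 0) := by
          refine Finset.sum_congr rfl fun a has => ?_
          rw [hSa a has, Finset.mul_sum]
          refine Finset.sum_congr rfl fun t ht => ?_
          split <;> simp
      _ = ∑ t ∈ s.powerset, ∑ a ∈ s, (if a ∈ t then c a * m t else 0) := Finset.sum_comm
      _ = ∑ t ∈ s.powerset, (∑ a ∈ t, c a) * m t := by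
          refine Finset.sum_congr rfl fun t ht => ?_
          rw [Finset.sum_ite_mem, Finset.inter_eq_right.2 (Finset.mem_powerset.1 ht),
            Finset.sum_mul]
  have hex : ∃ t ∈ s.powerset, 0 < m t ∧ ∑ a ∈ s, c a * μ₀ a ≤ ∑ a ∈ t, c a := by
    by_contra hcon
    push_neg at hcon
    have hlt : ∑ t ∈ s.powerset, (∑ a ∈ t, c a) * m t
        < ∑ t ∈ s.powerset, (∑ a ∈ s, c a * μ₀ a) * m t := by
      apply Finset.sum_lt_sum
      · intro t ht
        rcases (hm0 t ht).lt_or_eq with h | h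
        · exact mul_le_mul_of_nonneg_right (hcon t ht h).le h.le
        · rw [← h, mul_zero, mul_zero]
      · have hex2 : ∃ t ∈ s.powerset, 0 < m t := by
          by_contra h2
          push_neg at h2
          have h3 : ∑ t ∈ s.powerset, m t = 0 :=
            Finset.sum_eq_zero fun t ht => le_antisymm (h2 t ht) (hm0 t ht)
          rw [hms] at h3
          norm_num at h3
        obtain ⟨t, ht, hpos⟩ := hex2
        exact ⟨t, ht, mul_lt_mul_of_pos_right (hcon t ht hpos) hpos⟩
    rw [← Finset.mul_sum, hms, mul_one, ← hexch] at hlt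
    exact lt_irrefl _ hlt
  obtain ⟨t, ht, hpos, hle⟩ := hex
  have hne : atomFA s t ≠ ⊥ := by
    intro h
    rw [hm] at hpos
    simp only [h, hμbot] at hpos
    exact lt_irrefl _ hpos
  obtain ⟨J, hJ⟩ := exists_prime_not_mem hne
  refine ⟨J, ?_⟩
  have hind : ∀ a ∈ s, indFA a J = if a ∈ t then 1 else 0 := by
    intro a has
    by_cases hat : a ∈ t
    · have hle' : atomFA s t ≤ a := atomFA_le_of_mem hat
      have hnJ : a ∉ J.1 := fun h => hJ (J.1.lower hle' h)
      simp [indFA, hnJ, hat]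
    · have h1 : atomFA s t ≤ aᶜ := atomFA_le_compl_of_not_mem has hat
      have hb : a ⊓ atomFA s t = ⊥ := by
        rw [eq_bot_iff]
        calc a ⊓ atomFA s t ≤ a ⊓ aᶜ := inf_le_inf_left a h1
          _ = ⊥ := inf_compl_eq_bot
      have hmemJ : a ⊓ atomFA s t ∈ J.1 := by rw [hb]; exact J.1.bot_mem
      have haJ : a ∈ J.1 := (J.2.mem_or_mem hmemJ).resolve_right hJ
      simp [indFA, haJ, hat]
  calc ∑ a ∈ s, c a * μ₀ a ≤ ∑ a ∈ t, c a := hle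
    _ = ∑ a ∈ s, c a * indFA a J := by
        rw [show ∑ a ∈ s, c a * indFA a J = ∑ a ∈ s, (if a ∈ t then c a else 0) from
          Finset.sum_congr rfl fun a has => by rw [hind a has, mul_ite, mul_one, mul_zero]]
        rw [Finset.sum_ite_mem, Finset.inter_eq_right.2 (Finset.mem_powerset.1 ht)]

end Meas

end ExtendFAux

theorem extend_finitely_additive_from_subset
    {B : Type*} [BooleanAlgebra B] (Ω : Set B)
    (htop : (⊤ : B) ∈ Ω)
    (hmeet : ∀ a b, a ∈ Ω → b ∈ Ω → a ⊓ b ∈ Ω)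
    (hjoin : ∀ a b, a ∈ Ω → b ∈ Ω → a ⊔ b ∈ Ω)
    (hcompl : ∀ a, a ∈ Ω → aᶜ ∈ Ω)
    (μ₀ : B → ℝ)
    (hrange : ∀ a ∈ Ω, μ₀ a ∈ Set.Icc (0:ℝ) 1)
    (hone : μ₀ ⊤ = 1)
    (hadd : ∀ a b, a ∈ Ω → b ∈ Ω → a ⊓ b = ⊥ → μ₀ (a ⊔ b) = μ₀ a + μ₀ b) :
    ∃ μ : B → ℝ, (∀ a, μ a ∈ Set.Icc (0:ℝ) 1) ∧ μ ⊤ = 1 ∧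
      (∀ a b, a ⊓ b = ⊥ → μ (a ⊔ b) = μ a + μ b) ∧
      (∀ a ∈ Ω, μ a = μ₀ a) := by
  classical
  have hbot : (⊥ : B) ∈ Ω := by simpa using hcompl ⊤ htop
  have hμbot : μ₀ ⊥ = 0 := by
    have h := hadd ⊥ ⊥ hbot hbot (by simp)
    simp only [sup_idem] at h
    linarith
  have hTB : (⊤ : B) ≠ ⊥ := by
    intro h
    rw [h, hμbot] at hone
    norm_num at hone
  haveI : Nonempty (PIdlFA B) := ⟨(exists_prime_not_mem hTB).choose⟩
  -- the submodule of bounded functions on the space of prime ideals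
  let E : Submodule ℝ (PIdlFA B → ℝ) :=
    { carrier := {f | ∃ C, ∀ J, |f J| ≤ C}
      add_mem' := by
        rintro f g ⟨C, hC⟩ ⟨D, hD⟩
        exact ⟨C + D, fun J => (abs_add_le _ _).trans (add_le_add (hC J) (hD J))⟩
      zero_mem' := ⟨0, fun J => by simp⟩
      smul_mem' := by
        rintro r f ⟨C, hC⟩
        refine ⟨|r| * C, fun J => ?_⟩
        rw [Pi.smul_apply, smul_eq_mul, abs_mul]
        exact mul_le_mul_of_nonneg_left (hC J) (abs_nonneg r) }
  let fI : B → E := fun b => ⟨indFA b, 1, fun J => by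
    rw [abs_of_nonneg (indFA_nonneg b J)]; exact indFA_le_one b J⟩
  let T : (↥Ω →₀ ℝ) →ₗ[ℝ] E := Finsupp.linearCombination ℝ (fun a : ↥Ω => fI ↑a)
  let S : (↥Ω →₀ ℝ) →ₗ[ℝ] ℝ := Finsupp.linearCombination ℝ (fun a : ↥Ω => μ₀ ↑a)
  have hTval : ∀ (mm : ↥Ω →₀ ℝ) (J : PIdlFA B),
      ((T mm : E) : PIdlFA B → ℝ) J = ∑ a ∈ mm.support, mm a * indFA (↑a) J := by
    intro mm J
    rw [show T mm = ∑ a ∈ mm.support, mm a • fI ↑a from Finsupp.linearCombination_apply ℝ mm]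
    rw [show (((∑ a ∈ mm.support, mm a • fI ↑a : E)) : PIdlFA B → ℝ)
      = ∑ a ∈ mm.support, ((mm a • fI ↑a : E) : PIdlFA B → ℝ) from
        AddSubmonoidClass.coe_finset_sum _ _]
    rw [Finset.sum_apply]
    rfl
  have hSval : ∀ mm : ↥Ω →₀ ℝ, S mm = ∑ a ∈ mm.support, mm a * μ₀ ↑a := by
    intro mm
    rw [show S mm = ∑ a ∈ mm.support, mm a • μ₀ ↑a from Finsupp.linearCombination_apply ℝ mm]
    rfl
  have hkey' : ∀ mm : ↥Ω →₀ ℝ, ∃ J : PIdlFA B, S mm ≤ ((T mm : E) : PIdlFA B → ℝ) J := by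
    intro mm
    set s : Finset B := mm.support.image Subtype.val with hsdef
    have hs : ↑s ⊆ Ω := by
      intro x hx
      rw [hsdef] at hx
      simp only [Finset.coe_image, Set.mem_image] at hx
      obtain ⟨a, -, rfl⟩ := hx
      exact a.2
    set c : B → ℝ := fun b => if h : b ∈ Ω then mm ⟨b, h⟩ else 0 with hcdef
    obtain ⟨J, hJ⟩ := keyFA Ω htop hmeet hcompl μ₀ hrange hone hadd s hs c
    have hinj : Set.InjOn Subtype.val (mm.support : Set ↥Ω) :=
      Subtype.val_injective.injOn
    have hc : ∀ a : ↥Ω, c ↑a = mm a := by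
      intro a
      simp [hcdef, a.2]
    have h1 : ∑ a ∈ s, c a * μ₀ a = S mm := by
      rw [hSval, hsdef, Finset.sum_image hinj]
      exact Finset.sum_congr rfl fun a _ => by rw [hc]
    have h2 : ∑ a ∈ s, c a * indFA a J = ((T mm : E) : PIdlFA B → ℝ) J := by
      rw [hTval, hsdef, Finset.sum_image hinj]
      exact Finset.sum_congr rfl fun a _ => by rw [hc]
    exact ⟨J, by rw [← h1, ← h2]; exact hJ⟩
  have hker : LinearMap.ker T ≤ LinearMap.ker S := by
    intro mm hmm
    rw [LinearMap.mem_ker] at hmm ⊢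
    obtain ⟨J1, h1⟩ := hkey' mm
    obtain ⟨J2, h2⟩ := hkey' (-mm)
    rw [map_neg, map_neg, hmm] at h2
    rw [hmm] at h1
    simp only [ZeroMemClass.coe_zero, Pi.zero_apply, neg_zero, Pi.neg_apply] at h1 h2
    linarith
  let L₀ : ↥(LinearMap.range T) →ₗ[ℝ] ℝ :=
    (Submodule.liftQ (LinearMap.ker T) S hker).comp
      (LinearMap.quotKerEquivRange T).symm.toLinearMap
  have hL₀ : ∀ (mm : ↥Ω →₀ ℝ) (h : T mm ∈ LinearMap.range T), L₀ ⟨T mm, h⟩ = S mm := by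
    intro mm h
    show (Submodule.liftQ (LinearMap.ker T) S hker)
      ((LinearMap.quotKerEquivRange T).symm ⟨T mm, h⟩) = S mm
    rw [LinearMap.quotKerEquivRange_symm_apply_image, Submodule.mkQ_apply,
      Submodule.liftQ_apply]
  let f : (↥E) →ₗ.[ℝ] ℝ := ⟨LinearMap.range T, L₀⟩
  let N : ↥E → ℝ := fun x => ⨆ J, (x : PIdlFA B → ℝ) J
  have hbdd : ∀ x : ↥E, BddAbove (Set.range ((x : PIdlFA B → ℝ))) := by
    rintro ⟨x, C, hC⟩
    refine ⟨C, ?_⟩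
    rintro y ⟨J, rfl⟩
    exact (abs_le.1 (hC J)).2
  have N_le : ∀ (x : ↥E) (r : ℝ), (∀ J, (x : PIdlFA B → ℝ) J ≤ r) → N x ≤ r :=
    fun x r h => ciSup_le h
  have le_N : ∀ (x : ↥E) (J : PIdlFA B), (x : PIdlFA B → ℝ) J ≤ N x :=
    fun x J => le_ciSup (hbdd x) J
  have N_add : ∀ x y : ↥E, N (x + y) ≤ N x + N y := by
    intro x y
    refine N_le _ _ fun J => ?_
    rw [Submodule.coe_add, Pi.add_apply]
    exact add_le_add (le_N x J) (le_N y J)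
  have N_hom : ∀ r : ℝ, 0 < r → ∀ x : ↥E, N (r • x) = r * N x := by
    intro r hr x
    have h := Real.smul_iSup_of_nonneg hr.le (fun J => (x : PIdlFA B → ℝ) J)
    simp only [smul_eq_mul] at h
    show (⨆ J, ((r • x : ↥E) : PIdlFA B → ℝ) J) = r * ⨆ J, (x : PIdlFA B → ℝ) J
    simp only [Submodule.coe_smul, Pi.smul_apply, smul_eq_mul]
    exact h.symm
  have hfN : ∀ x : f.domain, f x ≤ N x := by
    rintro ⟨x, hx⟩
    obtain ⟨mm, rfl⟩ := hx
    have : f ⟨T mm, LinearMap.mem_range_self T mm⟩ = S mm := hL₀ mm _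
    rw [this]
    obtain ⟨J, hJ⟩ := hkey' mm
    exact hJ.trans (le_N _ J)
  obtain ⟨g, hg_ext, hgN⟩ := exists_extension_of_le_sublinear f N N_hom N_add hfN
  have hgT : ∀ mm : ↥Ω →₀ ℝ, g (T mm) = S mm := by
    intro mm
    have hmem : T mm ∈ LinearMap.range T := LinearMap.mem_range_self T mm
    have h1 := hg_ext ⟨T mm, hmem⟩
    rw [show ((⟨T mm, hmem⟩ : f.domain) : ↥E) = T mm from rfl] at h1
    rw [h1]
    exact hL₀ mm hmem
  have hgΩ : ∀ a ∈ Ω, g (fI a) = μ₀ a := by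
    intro a ha
    have h1 : T (Finsupp.single ⟨a, ha⟩ 1) = fI a := by
      rw [show T (Finsupp.single ⟨a, ha⟩ 1) = (1 : ℝ) • fI a from
        Finsupp.linearCombination_single ℝ _ _]
      rw [one_smul]
    have h2 : S (Finsupp.single ⟨a, ha⟩ 1) = μ₀ a := by
      rw [show S (Finsupp.single ⟨a, ha⟩ 1) = (1 : ℝ) • μ₀ a from
        Finsupp.linearCombination_single ℝ _ _]
      rw [smul_eq_mul, one_mul]
    rw [← h1, hgT, h2]
  have hub : ∀ b : B, g (fI b) ≤ 1 := by
    intro b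
    refine (hgN (fI b)).trans (N_le _ _ fun J => ?_)
    exact indFA_le_one b J
  have hlb : ∀ b : B, 0 ≤ g (fI b) := by
    intro b
    have h1 : g (-(fI b)) ≤ N (-(fI b)) := hgN _
    have h2 : N (-(fI b)) ≤ 0 := by
      refine N_le _ _ fun J => ?_
      rw [Submodule.coe_neg, Pi.neg_apply]
      have := indFA_nonneg b J
      show -(indFA b J) ≤ 0
      linarith
    rw [map_neg] at h1
    linarith
  refine ⟨fun b => g (fI b), fun b => ⟨hlb b, hub b⟩, ?_, ?_, fun a ha => hgΩ a ha⟩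
  · show g (fI ⊤) = 1
    rw [hgΩ ⊤ htop, hone]
  · intro a b hab
    show g (fI (a ⊔ b)) = g (fI a) + g (fI b)
    have hfIab : fI (a ⊔ b) = fI a + fI b := by
      apply Subtype.ext
      funext J
      rw [show ((fI (a ⊔ b) : ↥E) : PIdlFA B → ℝ) J = indFA (a ⊔ b) J from rfl]
      rw [indFA_add a b hab J]
      rfl
    rw [hfIab, map_add]
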